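/- Let G be an infinite group with a finite generating set A and fix a constant K. An evacuation scheme with constant K on the right Cayley graph Γ = C(G;A) exists if and only if for every finite nonempty subset Y ⊆ G there exists an evacuation scheme with constant K on the finite subgraph Y. -/

import Mathlib

/-- The group element corresponding to a letter `(i, b)`: the generator `A i` itself if
`b = true`, and its inverse if `b = false`. -/
def genOf {G : Type*} [Group G] {ι : Type*} (A : ι → G) : ι × Bool → G :=
  fun s => if s.2 then A s.1 else (A s.1)⁻¹

/-- An evacuation scheme with constant `C` on the right Cayley graph of `G` with respect to
the generating family `A`: to each vertex `v` we assign an infinite directed path starting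
at `v` (given by the sequence of positions `pos v` and the sequence of letters `step v`),
such that each directed edge `(g, s)` of the Cayley graph occurs at most `C` times in total
among all these paths. -/
structure EvacScheme {G : Type*} [Group G] {ι : Type*} (A : ι → G) (C : ℕ) where
  step : G → ℕ → ι × Bool
  pos : G → ℕ → G
  pos_zero : ∀ v : G, pos v 0 = v
  pos_succ : ∀ (v : G) (n : ℕ), pos v (n + 1) = pos v n * genOf A (step v n)
  bounded : ∀ (g : G) (s : ι × Bool) (T : Finset (G × ℕ)),
      (∀ p ∈ T, pos p.1 p.2 = g ∧ step p.1 p.2 = s) → T.card ≤ C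

/-- The inner boundary `∂Y` of a finite subset `Y`: the set of vertices of `Y` from which
some edge of the Cayley graph leads outside `Y`. -/
def innerBoundary {G : Type*} [Group G] {ι : Type*} (A : ι → G) (Y : Finset G) : Set G :=
  {g | g ∈ Y ∧ ∃ s : ι × Bool, g * genOf A s ∉ Y}

/-- An evacuation scheme with constant `K` on a finite subgraph `Y` of the right Cayley
graph: to each vertex `v ∈ Y` we assign a finite directed path of length `len v` lying
entirely inside `Y`, starting at `v` and ending at a vertex of the inner boundary `∂Y`,
such that each directed edge occurs at most `K` times in total among all these paths. -/
structure FinEvacScheme {G : Type*} [Group G] {ι : Type*} (A : ι → G) (Y : Finset G)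
    (K : ℕ) where
  len : G → ℕ
  step : G → ℕ → ι × Bool
  pos : G → ℕ → G
  pos_zero : ∀ v ∈ Y, pos v 0 = v
  pos_succ : ∀ v ∈ Y, ∀ n : ℕ, n < len v → pos v (n + 1) = pos v n * genOf A (step v n)
  inside : ∀ v ∈ Y, ∀ n : ℕ, n ≤ len v → pos v n ∈ Y
  ends : ∀ v ∈ Y, pos v (len v) ∈ innerBoundary A Y
  bounded : ∀ (g : G) (s : ι × Bool) (T : Finset (G × ℕ)),
      (∀ p ∈ T, p.1 ∈ Y ∧ p.2 < len p.1 ∧ pos p.1 p.2 = g ∧ step p.1 p.2 = s) →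
        T.card ≤ K

section Aux

variable {G : Type*} [Group G] {ι : Type*}

/-- The product of the first `k` letters of a step sequence. -/
def prodSteps (A : ι → G) (st : ℕ → ι × Bool) : ℕ → G
  | 0 => 1
  | k + 1 => prodSteps A st k * genOf A (st k)

lemma prodSteps_congr (A : ι → G) {st st' : ℕ → ι × Bool} {k : ℕ}
    (h : ∀ i < k, st i = st' i) : prodSteps A st k = prodSteps A st' k := by
  induction k with
  | zero => rfl
  | succ k ih =>
    simp only [prodSteps, ih (fun i hi => h i (hi.trans (Nat.lt_succ_self k))),
      h k (Nat.lt_succ_self k)]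

lemma FinEvacScheme.pos_eq {A : ι → G} {Y : Finset G} {K : ℕ} (S : FinEvacScheme A Y K)
    {v : G} (hv : v ∈ Y) : ∀ {k : ℕ}, k ≤ S.len v →
    S.pos v k = v * prodSteps A (S.step v) k := by
  intro k
  induction k with
  | zero => intro _; simp [S.pos_zero v hv, prodSteps]
  | succ k ih =>
    intro hk
    rw [S.pos_succ v hv k hk, ih (Nat.le_of_lt hk)]
    simp [prodSteps, mul_assoc]

lemma innerBoundary_exit {A : ι → G} {Y : Finset G} {g : G}
    (h : g ∈ innerBoundary A Y) : ∃ s : ι × Bool, g * genOf A s ∉ Y := h.2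

/-- Along an ultrafilter, a function into a finite type is eventually constant. -/
lemma ulim {α : Type*} [Finite α] (U : Ultrafilter ℕ) (f : ℕ → α) :
    ∃ a, ∀ᶠ m in (U : Filter ℕ), f m = a := by
  by_contra h
  push_neg at h
  have h' : ∀ a, ∀ᶠ m in (U : Filter ℕ), f m ≠ a :=
    fun a => h a
  have h'' : ∀ᶠ m in (U : Filter ℕ), ∀ a, f m ≠ a := Filter.eventually_all.2 h'
  obtain ⟨m, hm⟩ := h''.exists
  exact hm (f m) rfl

end Aux

section Forward

variable {G : Type*} [Group G] {ι : Type*} [Fintype ι]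

theorem forward_dir (A : ι → G) {K : ℕ} (E : EvacScheme A K) (Y : Finset G) :
    Nonempty (FinEvacScheme A Y K) := by
  classical
  -- every infinite path must eventually leave the finite set Y
  have exitex : ∀ v ∈ Y, ∃ n, E.pos v (n + 1) ∉ Y := by
    intro v hv
    by_contra hcon
    push_neg at hcon
    have hall : ∀ n, E.pos v n ∈ Y := by
      intro n
      cases n with
      | zero => rw [E.pos_zero]; exact hv
      | succ k => exact hcon k
    set t : Finset (G × (ι × Bool)) := Y ×ˢ Finset.univ with ht
    set N : ℕ := t.card * K + 1 with hN
    have hmap : ∀ n ∈ Finset.range N, (E.pos v n, E.step v n) ∈ t := by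
      intro n _
      exact Finset.mem_product.2 ⟨hall n, Finset.mem_univ _⟩
    have hlt : t.card * K < (Finset.range N).card := by
      simp [hN]
    obtain ⟨⟨g, s⟩, -, hcard⟩ :=
      Finset.exists_lt_card_fiber_of_mul_lt_card_of_maps_to hmap hlt
    set F : Finset ℕ :=
      {x ∈ Finset.range N | (E.pos v x, E.step v x) = (g, s)} with hF
    have hble : (F.image fun n => (v, n)).card ≤ K := by
      apply E.bounded g s
      intro p hp
      simp only [Finset.mem_image] at hp
      obtain ⟨n, hn, rfl⟩ := hp
      have h2 := (Finset.mem_filter.1 hn).2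
      exact ⟨congrArg Prod.fst h2, congrArg Prod.snd h2⟩
    rw [Finset.card_image_of_injective _
      (fun a b hab => by simpa using hab)] at hble
    omega
  let len : G → ℕ := fun v => if h : v ∈ Y then Nat.find (exitex v h) else 0
  have hinside : ∀ v ∈ Y, ∀ n : ℕ, n ≤ len v → E.pos v n ∈ Y := by
    intro v hv n hn
    cases n with
    | zero => rw [E.pos_zero]; exact hv
    | succ k =>
      have hk : k < Nat.find (exitex v hv) := by
        simp only [len, dif_pos hv] at hn
        omega
      have := Nat.find_min (exitex v hv) hk
      simpa using this
  refine ⟨⟨len, E.step, E.pos, fun v _ => E.pos_zero v,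
    fun v _ n _ => E.pos_succ v n, hinside, ?_, ?_⟩⟩
  · intro v hv
    refine ⟨hinside v hv (len v) le_rfl, ⟨E.step v (len v), ?_⟩⟩
    rw [← E.pos_succ]
    simp only [len, dif_pos hv]
    exact Nat.find_spec (exitex v hv)
  · intro g s T hT
    exact E.bounded g s T fun p hp => ⟨(hT p hp).2.2.1, (hT p hp).2.2.2⟩

end Forward

section Backward

variable {G : Type*} [Group G] [Infinite G] {ι : Type*} [Fintype ι]

theorem backward_dir (A : ι → G) (hA : Subgroup.closure (Set.range A) = ⊤) {K : ℕ}
    (h : ∀ Y : Finset G, Y.Nonempty → Nonempty (FinEvacScheme A Y K)) :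
    Nonempty (EvacScheme A K) := by
  classical
  -- ι is nonempty
  have hι : Nonempty (ι × Bool) := by
    by_contra hi
    rw [not_nonempty_iff] at hi
    have hιe : IsEmpty ι := ⟨fun i => hi.false (i, true)⟩
    have hre : Set.range A = ∅ := Set.range_eq_empty A
    rw [hre, Subgroup.closure_empty] at hA
    have hsub : Subsingleton G := by
      constructor
      intro a b
      have ha : a ∈ (⊥ : Subgroup G) := by rw [hA]; trivial
      have hb : b ∈ (⊥ : Subgroup G) := by rw [hA]; trivial
      rw [Subgroup.mem_bot] at ha hb
      rw [ha, hb]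
    exact (not_subsingleton G) hsub
  -- G is countable
  have hcount : Countable G := by
    have : Countable (FreeGroup ι) :=
      Function.Surjective.countable (f := FreeGroup.mk (α := ι))
        (fun x => Quot.inductionOn x fun L => ⟨L, rfl⟩)
    have hsurj : Function.Surjective (FreeGroup.lift A) := by
      rw [← MonoidHom.range_eq_top, FreeGroup.range_lift_eq_closure, hA]
    exact hsurj.countable
  obtain ⟨e⟩ : Nonempty (ℕ ≃ G) := nonempty_equiv_of_countable
  -- exhaustion of G
  let Ym : ℕ → Finset G := fun m => (Finset.range (m + 1)).image e
  have hYmem : ∀ g : G, ∀ m : ℕ, e.symm g ≤ m → g ∈ Ym m := by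
    intro g m hm
    refine Finset.mem_image.2 ⟨e.symm g, Finset.mem_range.2 (by omega), by simp⟩
  have hYne : ∀ m, (Ym m).Nonempty := fun m =>
    ⟨e 0, Finset.mem_image.2 ⟨0, Finset.mem_range.2 (by omega), rfl⟩⟩
  let S : ∀ m : ℕ, FinEvacScheme A (Ym m) K := fun m => (h (Ym m) (hYne m)).some
  -- the ultrafilter
  let U : Ultrafilter ℕ := Ultrafilter.of Filter.atTop
  have hU : (U : Filter ℕ) ≤ Filter.atTop := Ultrafilter.of_le Filter.atTop
  have hmem : ∀ g : G, ∀ᶠ m in (U : Filter ℕ), g ∈ Ym m := by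
    intro g
    exact (Filter.eventually_atTop.2 ⟨e.symm g, fun m hm => hYmem g m hm⟩).filter_mono hU
  -- the key divergence fact: paths get arbitrarily long along the ultrafilter
  have hlen : ∀ (v : G) (n : ℕ), ∀ᶠ m in (U : Filter ℕ), v ∈ Ym m ∧ n < (S m).len v := by
    intro v n
    by_contra hcon
    rw [← Ultrafilter.eventually_not] at hcon
    have hev : ∀ᶠ m in (U : Filter ℕ), v ∈ Ym m ∧ (S m).len v ≤ n := by
      filter_upwards [hcon, hmem v] with m hm hvm
      push_neg at hm
      exact ⟨hvm, hm hvm⟩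
    -- choose a boundary-exit witness for each m
    have hsw : ∀ m : ℕ, ∃ s : ι × Bool,
        v ∈ Ym m → (S m).pos v ((S m).len v) * genOf A s ∉ Ym m := by
      intro m
      by_cases hv : v ∈ Ym m
      · obtain ⟨s, hs⟩ := innerBoundary_exit ((S m).ends v hv)
        exact ⟨s, fun _ => hs⟩
      · exact ⟨hι.some, fun hv' => absurd hv' hv⟩
    choose sWit hsWit using hsw
    -- take the ultrafilter limit of the finite data
    obtain ⟨⟨L, σ, s0⟩, hf⟩ := ulim (α := Fin (n + 1) × (Fin n → ι × Bool) × (ι × Bool)) U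
      (fun m => (⟨min ((S m).len v) n, by omega⟩,
        fun k : Fin n => (S m).step v k, sWit m))
    -- the limiting step sequence and endpoint
    let σ' : ℕ → ι × Bool := fun i => if hi : i < n then σ ⟨i, hi⟩ else hι.some
    let w : G := v * prodSteps A σ' L
    have hbad : ∀ᶠ m in (U : Filter ℕ), w * genOf A s0 ∉ Ym m := by
      filter_upwards [hev, hf] with m hm hfm
      obtain ⟨hvm, hlm⟩ := hm
      have h1 : (⟨min ((S m).len v) n, by omega⟩ : Fin (n + 1)) = L := congrArg Prod.fst hfm
      have hL : (S m).len v = (L : ℕ) := by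
        have := congrArg Fin.val h1
        simp only at this
        omega
      have h2 : (fun k : Fin n => (S m).step v k) = σ :=
        congrArg (fun p => p.2.1) hfm
      have h3 : sWit m = s0 := congrArg (fun p => p.2.2) hfm
      have hLn : (L : ℕ) ≤ n := by omega
      have hsteps : ∀ i < (L : ℕ), (S m).step v i = σ' i := by
        intro i hi
        have hin : i < n := lt_of_lt_of_le hi hLn
        have := congrFun h2 ⟨i, hin⟩
        simpa [σ', dif_pos hin] using this
      have hpos : (S m).pos v ((S m).len v) = w := by
        rw [hL, (S m).pos_eq hvm (hL ▸ le_rfl)]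
        unfold w
        rw [prodSteps_congr A hsteps]
      have := hsWit m hvm
      rw [hpos, h3] at this
      exact this
    have hgood := hmem (w * genOf A s0)
    obtain ⟨m, hm1, hm2⟩ := (hbad.and hgood).exists
    exact hm1 hm2
  -- the limiting scheme
  have hstp : ∀ (v : G) (n : ℕ), ∃ a : ι × Bool,
      ∀ᶠ m in (U : Filter ℕ), (S m).step v n = a := fun v n => ulim U _
  choose stp hstp using hstp
  let ps : G → ℕ → G := fun v => Nat.rec v (fun n p => p * genOf A (stp v n))
  have hag : ∀ (v : G) (n : ℕ), ∀ᶠ m in (U : Filter ℕ), (S m).pos v n = ps v n := by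
    intro v n
    induction n with
    | zero =>
      filter_upwards [hmem v] with m hvm
      exact (S m).pos_zero v hvm
    | succ k ih =>
      filter_upwards [ih, hstp v k, hlen v k] with m h1 h2 h3
      rw [(S m).pos_succ v h3.1 k h3.2, h1, h2]
  refine ⟨⟨stp, ps, fun v => rfl, fun v n => rfl, ?_⟩⟩
  intro g s T hT
  have hev : ∀ᶠ m in (U : Filter ℕ), ∀ p ∈ T,
      p.1 ∈ Ym m ∧ p.2 < (S m).len p.1 ∧ (S m).pos p.1 p.2 = g ∧ (S m).step p.1 p.2 = s := by
    rw [Filter.eventually_all_finset]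
    intro p hp
    filter_upwards [hlen p.1 p.2, hag p.1 p.2, hstp p.1 p.2] with m h1 h2 h3
    exact ⟨h1.1, h1.2, h2.trans (hT p hp).1, h3.trans (hT p hp).2⟩
  obtain ⟨m, hm⟩ := hev.exists
  exact (S m).bounded g s T hm

end Backward

/-- Let `G` be an infinite group with a finite generating set `A` and fix a
constant `K`. An evacuation scheme with constant `K` on the right Cayley graph
`Γ = C(G; A)` exists if and only if for every finite nonempty subset `Y ⊆ G` there exists an
evacuation scheme with constant `K` on the finite subgraph `Y`. -/
theorem evacScheme_iff_finEvacScheme {G : Type*} [Group G] [Infinite G]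
    {ι : Type*} [Fintype ι] (A : ι → G)
    (hA : Subgroup.closure (Set.range A) = ⊤) (K : ℕ) :
    Nonempty (EvacScheme A K) ↔
      ∀ Y : Finset G, Y.Nonempty → Nonempty (FinEvacScheme A Y K) := by
  constructor
  · rintro ⟨E⟩ Y _
    exact forward_dir A E Y
  · intro h
    exact backward_dir A hA h
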